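/- Let f = g·g' in F[x_1,…,x_n], let S ⊆ {1,…,n}, and suppose g' involves only the variables x_j with j ∉ S. Then for every exponent vector e ∈ ℕ^n with support contained in S and 1 ≤ |e| ≤ t, the coefficient of the monomial x^e in H_t(f) equals the coefficient of x^e in H_t(g) multiplied by g'(z), i.e., coeff_{x^e}(H_t(f)) = coeff_{x^e}(H_t(g)) · g'(z) in F[z]. -/

import Mathlib

noncomputable section

/-- The (total) degree of a monomial `m`, i.e. `|m| = ∑ i, m i`. -/
def mdeg {σ : Type*} (m : σ →₀ ℕ) : ℕ := m.sum fun _ e => e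

/-- Truncation of a multivariate polynomial keeping exactly the terms of total degree
between `1` and `t`. -/
def truncLE {σ A : Type*} [CommSemiring A] (t : ℕ) (p : MvPolynomial σ A) :
    MvPolynomial σ A :=
  ∑ m ∈ p.support.filter (fun m => 1 ≤ mdeg m ∧ mdeg m ≤ t),
    MvPolynomial.monomial m (MvPolynomial.coeff m p)

/-- `Ht t f` is `H_t(f)`: the truncation to degree at most `t` (in the variables `x`)
of `f(x + z) − f(z)`, viewed as an element of `F[z][x]`. -/
def Ht {n : ℕ} {A : Type*} [CommRing A] (t : ℕ) (f : MvPolynomial (Fin n) A) :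
    MvPolynomial (Fin n) (MvPolynomial (Fin n) A) :=
  truncLE t
    (MvPolynomial.eval₂ ((MvPolynomial.C).comp (MvPolynomial.C))
      (fun j => MvPolynomial.X j + MvPolynomial.C (MvPolynomial.X j)) f
      - MvPolynomial.C f)

open MvPolynomial in
lemma coeff_truncLE {σ A : Type*} [CommSemiring A] (t : ℕ) (p : MvPolynomial σ A)
    (e : σ →₀ ℕ) (h1 : 1 ≤ mdeg e) (h2 : mdeg e ≤ t) :
    coeff e (truncLE t p) = coeff e p := by
  classical
  unfold truncLE
  rw [coeff_sum]
  simp only [coeff_monomial]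
  rw [Finset.sum_ite_eq' _ e (fun m => coeff m p)]
  by_cases hp : e ∈ p.support
  · rw [if_pos (by simp [hp, h1, h2])]
  · rw [MvPolynomial.notMem_support_iff.mp hp]; simp


open MvPolynomial

/-- Let `f = g·g'` in `F[x_1,…,x_n]` and suppose `g'` involves only variables `x_j`
with `j ∉ S`.  Then for every exponent vector `e` with support contained in `S` and
`1 ≤ |e| ≤ t`, the coefficient of `x^e` in `H_t(f)` equals the coefficient of `x^e`
in `H_t(g)` multiplied by `g'(z)` (as elements of `F[z]`; here `g'(z)` is `g'` with
each `x_j` replaced by `z_j`, i.e. `g'` itself viewed in the identically-indexed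
coefficient ring). -/
theorem coeff_Ht_mul_of_disjoint (F : Type*) [Field F] (n t : ℕ)
    (g g' : MvPolynomial (Fin n) F) (S : Set (Fin n))
    (hg' : g' ∈ MvPolynomial.supported F Sᶜ)
    (e : Fin n →₀ ℕ) (hsupp : ∀ i, e i ≠ 0 → i ∈ S)
    (h1 : 1 ≤ mdeg e) (h2 : mdeg e ≤ t) :
    MvPolynomial.coeff e (Ht t (g * g')) = MvPolynomial.coeff e (Ht t g) * g' := by
  classical
  set v : Fin n → MvPolynomial (Fin n) (MvPolynomial (Fin n) F) :=
    fun j => X j + C (X j) with hv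
  have he0 : e ≠ 0 := by
    rintro rfl
    simp [mdeg] at h1
  have key : ∀ p : MvPolynomial (Fin n) F,
      coeff e (Ht t p) = coeff e (eval₂ (C.comp C) v p) := by
    intro p
    rw [Ht, coeff_truncLE _ _ _ h1 h2, coeff_sub, coeff_C, if_neg (Ne.symm he0), sub_zero]
  rw [key, key, eval₂_mul, coeff_mul]
  -- membership of the image of g' in supported Sᶜ over the big coefficient ring
  have hmem : eval₂ (C.comp C) v g' ∈
      supported (MvPolynomial (Fin n) F) Sᶜ := by
    rw [MvPolynomial.supported_eq_adjoin_X] at hg' ⊢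
    induction hg' using Algebra.adjoin_induction with
    | mem x hx =>
      obtain ⟨j, hj, rfl⟩ := hx
      rw [eval₂_X, hv]
      refine add_mem (Algebra.subset_adjoin ⟨j, hj, rfl⟩) ?_
      rw [← MvPolynomial.algebraMap_eq]
      exact Subalgebra.algebraMap_mem _ (X j)
    | algebraMap r =>
      rw [MvPolynomial.algebraMap_eq, eval₂_C, RingHom.comp_apply, ← MvPolynomial.algebraMap_eq]
      exact Subalgebra.algebraMap_mem _ (C r)
    | add x y hx hy ihx ihy =>
      rw [eval₂_add]
      exact add_mem ihx ihy
    | mul x y hx hy ihx ihy =>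
      rw [eval₂_mul]
      exact mul_mem ihx ihy
  have hvars : ↑(eval₂ (C.comp C) v g').vars ⊆ Sᶜ := mem_supported.mp hmem
  have hzero : ∀ b : Fin n →₀ ℕ, b ≠ 0 → b ≤ e → coeff b (eval₂ (C.comp C) v g') = 0 := by
    intro b hb hble
    by_contra hc
    obtain ⟨i, hi⟩ : ∃ i, b i ≠ 0 := by
      by_contra h
      push_neg at h
      exact hb (Finsupp.ext fun i => h i)
    have : i ∈ (eval₂ (C.comp C) v g').vars :=
      (mem_vars i).mpr ⟨b, mem_support_iff.mpr hc, Finsupp.mem_support_iff.mpr hi⟩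
    have hiS : i ∈ S := hsupp i (fun h => hi (Nat.le_antisymm (h ▸ hble i) (Nat.zero_le _)))
    exact (hvars this) hiS
  have hconst : coeff 0 (eval₂ (C.comp C) v g') = g' := by
    have : coeff 0 (eval₂ (C.comp C) v g')
        = constantCoeff (eval₂ (C.comp C) v g') := rfl
    rw [this]
    rw [show (constantCoeff (eval₂ (C.comp C) v g') : MvPolynomial (Fin n) F)
        = eval₂ ((constantCoeff).comp (C.comp C)) (fun j => constantCoeff (v j)) g' from
      eval₂_comp_left _ _ _ _]
    have h1' : (constantCoeff (R := MvPolynomial (Fin n) F) (σ := Fin n)).comp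
        ((C (R := MvPolynomial (Fin n) F) (σ := Fin n)).comp (C (R := F) (σ := Fin n)))
        = C (R := F) (σ := Fin n) := by
      ext a
      simp
    have h2' : (fun j => constantCoeff (v j)) = (X : Fin n → MvPolynomial (Fin n) F) := by
      funext j
      simp [hv]
    rw [h1', h2', eval₂_eta]
  rw [Finset.sum_eq_single (e, (0 : Fin n →₀ ℕ))]
  · rw [hconst]
  · rintro ⟨a, b⟩ hab hne
    rw [Finset.HasAntidiagonal.mem_antidiagonal] at hab
    have hb : b ≠ 0 := by
      rintro rfl
      exact hne (by simp [← hab])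
    rw [hzero b hb (by rw [← hab]; exact le_add_self), mul_zero]
  · intro h
    exact absurd (Finset.HasAntidiagonal.mem_antidiagonal.mpr (by simp)) h


end
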